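/- (Sokhotskii-type limit on ℤ₊) Let u : ℤ → ℂ be absolutely summable with Fourier series û(t) = Σ_{k ∈ ℤ} u(k) e^{−ikt}. Then for every ξ ∈ ℝ, lim_{τ→0⁺} (1/(2π)) ∫_{−π}^{π} û(t) · (1 − e^{−τ} e^{−i(ξ−t)})^{−1} dt = Σ_{k=0}^{∞} u(k) e^{−ikξ}; that is, the regularized cotangent-kernel integral converges, as the regularization parameter tends to zero, to the Fourier transform F(χ_{ℤ₊} · u)(ξ) of the truncation of u to ℤ₊. -/

import Mathlib

open MeasureTheory Complex Real

/-- The Fourier series `û(t) = Σ_{k ∈ ℤ} u(k) e^{−ikt}` of a function of a discrete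
variable. -/
noncomputable def discreteFourier (u : ℤ → ℂ) (t : ℝ) : ℂ :=
  ∑' k : ℤ, u k * Complex.exp (-Complex.I * (k : ℂ) * (t : ℂ))

lemma orth (m : ℤ) : (∫ t in (-Real.pi)..Real.pi, Complex.exp (Complex.I * (m : ℂ) * (t : ℂ)))
    = if m = 0 then (2 * Real.pi : ℂ) else 0 := by
  rcases eq_or_ne m 0 with h | h
  · simp [h, Complex.ofReal_mul]
    norm_num
    push_cast
    ring
  · rw [if_neg h]
    have hc : (Complex.I * (m : ℂ)) ≠ 0 := by
      simp [Complex.I_ne_zero, Complex.ext_iff]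
      exact_mod_cast h
    have := integral_exp_mul_complex (a := -Real.pi) (b := Real.pi) hc
    simp only [mul_assoc] at this ⊢
    rw [this]
    have key : Complex.exp (Complex.I * ((m : ℂ) * (Real.pi : ℂ)))
        = Complex.exp (Complex.I * ((m : ℂ) * ((-Real.pi : ℝ) : ℂ))) := by
      rw [show Complex.I * ((m : ℂ) * (Real.pi : ℂ))
          = Complex.I * ((m : ℂ) * ((-Real.pi : ℝ) : ℂ)) + (m : ℂ) * (2 * Real.pi * Complex.I) by
        push_cast; ring]
      rw [Complex.exp_add, Complex.exp_int_mul_two_pi_mul_I, mul_one]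
    rw [key, sub_self, zero_div]

lemma norm_exp_I_aux (k : ℤ) (t : ℝ) : ‖Complex.exp (-Complex.I * (k : ℂ) * (t : ℂ))‖ = 1 := by
  rw [Complex.norm_exp]
  simp [Complex.exp_re]

lemma norm_z (r ξ t : ℝ) : ‖(r : ℂ) * Complex.exp (-Complex.I * ((ξ : ℂ) - (t : ℂ)))‖ = |r| := by
  rw [norm_mul, Complex.norm_exp]
  have : (-Complex.I * ((ξ : ℂ) - (t : ℂ))).re = 0 := by simp
  simp [this]

lemma key_integral (u : ℤ → ℂ) (hu : Summable fun k : ℤ => ‖u k‖) (ξ : ℝ) {r : ℝ}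
    (hr0 : 0 ≤ r) (hr1 : r < 1) :
    (∫ t in (-Real.pi)..Real.pi, discreteFourier u t *
        (1 - (r : ℂ) * Complex.exp (-Complex.I * ((ξ : ℂ) - (t : ℂ))))⁻¹)
      = (2 * Real.pi : ℂ) *
        ∑' n : ℕ, ((r : ℂ) ^ n) * (u n * Complex.exp (-Complex.I * (n : ℂ) * (ξ : ℂ))) := by
  set z : ℝ → ℂ := fun t => (r : ℂ) * Complex.exp (-Complex.I * ((ξ : ℂ) - (t : ℂ))) with hz
  have hznorm : ∀ t, ‖z t‖ = r := by
    intro t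
    have h1 : ‖((r : ℝ) : ℂ)‖ = r := by
      rw [Complex.norm_real]; exact _root_.abs_of_nonneg hr0
    have h2 : ‖Complex.exp (-Complex.I * ((ξ : ℂ) - (t : ℂ)))‖ = 1 := by
      rw [Complex.norm_exp]
      simp
    simp only [hz]
    rw [norm_mul, h1, h2, mul_one]
  -- the integrand as a double sum
  set f : ℤ × ℕ → ℝ → ℂ := fun p t =>
    (u p.1 * Complex.exp (-Complex.I * (p.1 : ℂ) * (t : ℂ))) * (z t) ^ p.2 with hf
  have step1 : ∀ t : ℝ, discreteFourier u t * (1 - z t)⁻¹ = ∑' p : ℤ × ℕ, f p t := by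
    intro t
    rw [← tsum_geometric_of_norm_lt_one (ξ := z t) (by rw [hznorm]; exact hr1)]
    refine tsum_mul_tsum_of_summable_norm ?_ ?_
    · exact hu.congr fun k => by rw [norm_mul, norm_exp_I_aux, mul_one]
    · exact (summable_geometric_of_lt_one hr0 hr1).congr
        fun n => by rw [norm_pow, hznorm]
  -- pointwise rearrangement of each term
  have term_eq : ∀ (p : ℤ × ℕ) (t : ℝ), f p t
      = (u p.1 * (r : ℂ) ^ p.2 * Complex.exp (-Complex.I * (p.2 : ℂ) * (ξ : ℂ))) *
          Complex.exp (Complex.I * (((p.2 : ℤ) - p.1 : ℤ) : ℂ) * (t : ℂ)) := by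
    rintro ⟨k, n⟩ t
    simp only [hf, hz, mul_pow, ← Complex.exp_nat_mul]
    push_cast
    rw [show u k * Complex.exp (-Complex.I * (k : ℂ) * (t : ℂ)) *
        ((r : ℂ) ^ n * Complex.exp ((n : ℂ) * (-Complex.I * ((ξ : ℂ) - (t : ℂ)))))
        = u k * (r : ℂ) ^ n * (Complex.exp (-Complex.I * (k : ℂ) * (t : ℂ)) *
          Complex.exp ((n : ℂ) * (-Complex.I * ((ξ : ℂ) - (t : ℂ))))) from by ring]
    rw [← Complex.exp_add]
    rw [show u k * (r : ℂ) ^ n * Complex.exp (-Complex.I * (n : ℂ) * (ξ : ℂ)) *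
        Complex.exp (Complex.I * ((n : ℂ) - (k : ℂ)) * (t : ℂ))
        = u k * (r : ℂ) ^ n * (Complex.exp (-Complex.I * (n : ℂ) * (ξ : ℂ)) *
          Complex.exp (Complex.I * ((n : ℂ) - (k : ℂ)) * (t : ℂ))) from by ring]
    rw [← Complex.exp_add]
    congr 1
    ring
  have fnorm : ∀ (p : ℤ × ℕ) (t : ℝ), ‖f p t‖ = ‖u p.1‖ * r ^ p.2 := by
    rintro ⟨k, n⟩ t
    simp only [hf]
    rw [norm_mul, norm_mul, norm_pow, hznorm, norm_exp_I_aux, mul_one]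
  have fmeas : ∀ p : ℤ × ℕ, AEStronglyMeasurable (f p) (volume.restrict (Set.Ioc (-Real.pi) Real.pi)) := by
    intro p
    apply Continuous.aestronglyMeasurable
    simp only [hf, hz]
    fun_prop
  have hbound : Summable fun p : ℤ × ℕ => ‖u p.1‖ * r ^ p.2 :=
    hu.mul_of_nonneg (summable_geometric_of_lt_one hr0 hr1)
      (fun k => norm_nonneg _) (fun n => pow_nonneg hr0 n)
  have hlint : (∑' p : ℤ × ℕ, ∫⁻ t in Set.Ioc (-Real.pi) Real.pi, ‖f p t‖₊ ∂volume) ≠ ⊤ := by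
    have heq : ∀ p : ℤ × ℕ, (∫⁻ t in Set.Ioc (-Real.pi) Real.pi, ‖f p t‖₊ ∂volume)
        = ENNReal.ofReal ((‖u p.1‖ * r ^ p.2) * (2 * Real.pi)) := by
      intro p
      have : ∀ t : ℝ, (‖f p t‖₊ : ENNReal) = ENNReal.ofReal (‖u p.1‖ * r ^ p.2) := by
        intro t
        rw [← fnorm p t]
        exact (ofReal_norm_eq_enorm _).symm
      rw [lintegral_congr this, setLIntegral_const]
      rw [Real.volume_Ioc, ← ENNReal.ofReal_mul (by positivity)]
      congr 1
      ring
    rw [tsum_congr heq, ← ENNReal.ofReal_tsum_of_nonneg (fun p => by positivity)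
      (hbound.mul_right _)]
    exact ENNReal.ofReal_ne_top
  calc (∫ t in (-Real.pi)..Real.pi, discreteFourier u t * (1 - z t)⁻¹)
      = ∫ t in Set.Ioc (-Real.pi) Real.pi, ∑' p : ℤ × ℕ, f p t := by
        rw [intervalIntegral.integral_of_le (by linarith [Real.pi_pos])]
        exact setIntegral_congr_fun measurableSet_Ioc (fun t _ => step1 t)
    _ = ∑' p : ℤ × ℕ, ∫ t in Set.Ioc (-Real.pi) Real.pi, f p t :=
        integral_tsum fmeas hlint
    _ = ∑' p : ℤ × ℕ, (if ((p.2 : ℤ) - p.1) = 0 then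
          (u p.1 * (r : ℂ) ^ p.2 * Complex.exp (-Complex.I * (p.2 : ℂ) * (ξ : ℂ))) * (2 * Real.pi : ℂ)
          else 0) := by
        apply tsum_congr
        intro p
        rw [setIntegral_congr_fun measurableSet_Ioc (fun t _ => term_eq p t)]
        rw [← intervalIntegral.integral_of_le (by linarith [Real.pi_pos]),
          intervalIntegral.integral_const_mul, orth]
        split <;> simp
    _ = (2 * Real.pi : ℂ) *
        ∑' n : ℕ, ((r : ℂ) ^ n) * (u n * Complex.exp (-Complex.I * (n : ℂ) * (ξ : ℂ))) := by
        rw [← tsum_mul_left]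
        have hinj : Function.Injective (fun n : ℕ => (((n : ℤ), n) : ℤ × ℕ)) := by
          intro a b h
          simpa using congrArg Prod.snd h
        rw [← Function.Injective.tsum_eq hinj]
        · apply tsum_congr
          intro n
          rw [if_pos (sub_self ((n : ℤ)))]
          ring
        · intro p hp
          simp only [Function.mem_support, ne_eq] at hp
          by_cases h : ((p.2 : ℤ) - p.1) = 0
          · exact ⟨p.2, by ext <;> simp [← sub_eq_zero.mp h]⟩
          · exact absurd (if_neg h) hp

theorem sokhotskii_limit_Zplus (u : ℤ → ℂ)
    (hu : Summable fun k : ℤ => ‖u k‖) (ξ : ℝ) :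
    Filter.Tendsto
      (fun τ : ℝ => (1 / (2 * (Real.pi : ℂ))) *
        ∫ t in (-Real.pi)..Real.pi, discreteFourier u t *
          (1 - (Real.exp (-τ) : ℂ) * Complex.exp (-Complex.I * ((ξ : ℂ) - (t : ℂ))))⁻¹)
      (nhdsWithin 0 (Set.Ioi 0))
      (nhds (∑' k : ℕ, u (k : ℤ) * Complex.exp (-Complex.I * (k : ℂ) * (ξ : ℂ)))) := by
  have hπ : (2 * (Real.pi : ℂ)) ≠ 0 := by
    simp [Complex.ext_iff, Real.pi_ne_zero]
  have hmain : Filter.Tendsto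
      (fun τ : ℝ => ∑' n : ℕ, ((Real.exp (-τ) : ℂ) ^ n) *
        (u n * Complex.exp (-Complex.I * (n : ℂ) * (ξ : ℂ))))
      (nhdsWithin 0 (Set.Ioi 0))
      (nhds (∑' k : ℕ, u (k : ℤ) * Complex.exp (-Complex.I * (k : ℂ) * (ξ : ℂ)))) := by
    apply tendsto_tsum_of_dominated_convergence (bound := fun n : ℕ => ‖u (n : ℤ)‖)
      (hu.comp_injective fun a b h => by exact_mod_cast h)
    · intro k
      have hc : Continuous fun τ : ℝ => ((Real.exp (-τ) : ℂ)) ^ k *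
          (u k * Complex.exp (-Complex.I * (k : ℂ) * (ξ : ℂ))) := by fun_prop
      have h0 := hc.tendsto 0
      simp only [neg_zero, Real.exp_zero, Complex.ofReal_one, one_pow, one_mul] at h0
      exact h0.mono_left nhdsWithin_le_nhds
    · filter_upwards [self_mem_nhdsWithin] with τ (hτ : (0:ℝ) < τ) k
      rw [norm_mul, norm_mul, norm_pow]
      have h1 : ‖((Real.exp (-τ) : ℝ) : ℂ)‖ = Real.exp (-τ) := by
        rw [Complex.norm_real]; exact _root_.abs_of_nonneg (Real.exp_pos _).le
      have h2 : ‖Complex.exp (-Complex.I * (k : ℂ) * (ξ : ℂ))‖ = 1 := norm_exp_I_aux k ξ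
      rw [h1, h2, mul_one]
      have : Real.exp (-τ) ^ k ≤ 1 :=
        pow_le_one₀ (Real.exp_pos _).le (Real.exp_le_one_iff.mpr (by linarith))
      calc Real.exp (-τ) ^ k * ‖u (k : ℤ)‖ ≤ 1 * ‖u (k : ℤ)‖ :=
            mul_le_mul_of_nonneg_right this (norm_nonneg _)
        _ = ‖u (k : ℤ)‖ := one_mul _
  apply hmain.congr'
  filter_upwards [self_mem_nhdsWithin] with τ (hτ : (0:ℝ) < τ)
  rw [key_integral u hu ξ (Real.exp_pos _).le (Real.exp_lt_one_iff.mpr (by linarith)),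
    ← mul_assoc, one_div, inv_mul_cancel₀ hπ, one_mul]
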